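/- Under the stationary AR(1) model with additive measurement error X_t* = α₀ + α₁ X_t + e_t, the population intercept of the naive regression of X_t* on X_{t-1}* equals φ₀* = (α₀ + α₁ φ₀/(1 − φ₁))(1 − φ₁ ω₁) where ω₁ = α₁²σ_ε²/(α₁²σ_ε² + σ_e²(1 − φ₁²)), i.e., φ₀* = E(X_t*)(1 − φ₁*). -/

import Mathlib

open MeasureTheory ProbabilityTheory Filter Matrix

noncomputable def expect {Ω : Type*} [MeasurableSpace Ω] (P : Measure Ω) (f : Ω → ℝ) : ℝ :=
  ∫ ω, f ω ∂P

noncomputable def cov {Ω : Type*} [MeasurableSpace Ω] (P : Measure Ω) (f g : Ω → ℝ) : ℝ :=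
  expect P (fun ω => (f ω - expect P f) * (g ω - expect P g))

noncomputable def pvar {Ω : Type*} [MeasurableSpace Ω] (P : Measure Ω) (f : Ω → ℝ) : ℝ :=
  cov P f f

section helpers

variable {Ω : Type*} [MeasurableSpace Ω] (P : Measure Ω) [IsProbabilityMeasure P]

lemma expect_const (a : ℝ) : expect P (fun _ => a) = a := by
  simp [expect]

lemma expect_add {f g : Ω → ℝ} (hf : Integrable f P) (hg : Integrable g P) :
    expect P (fun ω => f ω + g ω) = expect P f + expect P g :=
  integral_add hf hg

lemma expect_const_mul (b : ℝ) (f : Ω → ℝ) :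
    expect P (fun ω => b * f ω) = b * expect P f :=
  integral_const_mul b f

lemma expect_combo (a b : ℝ) {f g : Ω → ℝ} (hf : Integrable f P) (hg : Integrable g P) :
    expect P (fun ω => a + b * f ω + g ω) = a + b * expect P f + expect P g := by
  have h1 : Integrable (fun ω => a + b * f ω) P := (integrable_const a).add (hf.const_mul b)
  have h2 : Integrable (fun ω => b * f ω) P := hf.const_mul b
  rw [expect_add P h1 hg, expect_add P (integrable_const a) h2,
      expect_const, expect_const_mul]

lemma integrable_centered_mul {f g : Ω → ℝ} (h : IndepFun f g P)
    (hf : Integrable f P) (hg : Integrable g P) (cf cg : ℝ) :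
    Integrable (fun ω => (f ω - cf) * (g ω - cg)) P := by
  have h' : IndepFun (fun ω => f ω - cf) (fun ω => g ω - cg) P :=
    h.comp (measurable_id.sub_const cf) (measurable_id.sub_const cg)
  exact h'.integrable_mul (hf.sub (integrable_const _)) (hg.sub (integrable_const _))

lemma integral_centered_mul_indep {f g : Ω → ℝ} (h : IndepFun f g P)
    (hf : Integrable f P) (hg : Integrable g P) (cf cg : ℝ) :
    expect P (fun ω => (f ω - cf) * (g ω - cg))
      = (expect P f - cf) * (expect P g - cg) := by
  have h' : IndepFun (fun ω => f ω - cf) (fun ω => g ω - cg) P :=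
    h.comp (measurable_id.sub_const cf) (measurable_id.sub_const cg)
  have h2 : (∫ ω, (f ω - cf) * (g ω - cg) ∂P)
      = (∫ ω, f ω - cf ∂P) * (∫ ω, g ω - cg ∂P) :=
    h'.integral_mul_eq_mul_integral (hf.sub (integrable_const cf)).aestronglyMeasurable (hg.sub (integrable_const cg)).aestronglyMeasurable
  simp only [expect]
  rw [h2, integral_sub hf (integrable_const cf), integral_sub hg (integrable_const cg)]
  simp

lemma cov_indep_zero {f g : Ω → ℝ} (h : IndepFun f g P)
    (hf : Integrable f P) (hg : Integrable g P) : cov P f g = 0 := by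
  unfold cov
  rw [integral_centered_mul_indep P h hf hg]
  simp

lemma integrable_centered_sq {f : Ω → ℝ} (hf : Integrable f P)
    (hf2 : Integrable (fun ω => f ω ^ 2) P) (c : ℝ) :
    Integrable (fun ω => (f ω - c) * (f ω - c)) P := by
  have : (fun ω => (f ω - c) * (f ω - c))
      = fun ω => (f ω ^ 2 - (2 * c) * f ω) + c ^ 2 := by
    funext ω; ring
  rw [this]
  exact (hf2.sub (hf.const_mul (2 * c))).add (integrable_const _)

/-- Bilinear expansion of the covariance of two affine combinations. -/
lemma cov_affine_expand (a b : ℝ) (f g u v : Ω → ℝ)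
    (hf : Integrable f P) (hg : Integrable g P) (hu : Integrable u P) (hv : Integrable v P)
    (hfg : Integrable (fun ω => (f ω - expect P f) * (g ω - expect P g)) P)
    (hfv : Integrable (fun ω => (f ω - expect P f) * (v ω - expect P v)) P)
    (hug : Integrable (fun ω => (u ω - expect P u) * (g ω - expect P g)) P)
    (huv : Integrable (fun ω => (u ω - expect P u) * (v ω - expect P v)) P) :
    cov P (fun ω => a + b * f ω + u ω) (fun ω => a + b * g ω + v ω)
      = b ^ 2 * cov P f g + b * cov P f v + b * cov P u g + cov P u v := by
  have hm1 := expect_combo P a b hf hu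
  have hm2 := expect_combo P a b hg hv
  unfold cov
  rw [hm1, hm2]
  have hrw : (fun ω => (a + b * f ω + u ω - (a + b * expect P f + expect P u)) *
      (a + b * g ω + v ω - (a + b * expect P g + expect P v)))
      = fun ω => (b ^ 2 * ((f ω - expect P f) * (g ω - expect P g))
          + b * ((f ω - expect P f) * (v ω - expect P v)))
          + (b * ((u ω - expect P u) * (g ω - expect P g))
          + (u ω - expect P u) * (v ω - expect P v)) := by
    funext ω; ring
  have i1 : Integrable (fun ω => b ^ 2 * ((f ω - expect P f) * (g ω - expect P g))) P :=
    hfg.const_mul _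
  have i2 : Integrable (fun ω => b * ((f ω - expect P f) * (v ω - expect P v))) P :=
    hfv.const_mul _
  have i3 : Integrable (fun ω => b * ((u ω - expect P u) * (g ω - expect P g))) P :=
    hug.const_mul _
  have i12 : Integrable (fun ω => b ^ 2 * ((f ω - expect P f) * (g ω - expect P g))
      + b * ((f ω - expect P f) * (v ω - expect P v))) P := i1.add i2
  have i34 : Integrable (fun ω => b * ((u ω - expect P u) * (g ω - expect P g))
      + (u ω - expect P u) * (v ω - expect P v)) P := i3.add huv
  rw [hrw, expect_add P i12 i34, expect_add P i1 i2, expect_add P i3 huv,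
    expect_const_mul, expect_const_mul, expect_const_mul]
  ring

end helpers

theorem naive_ar1_intercept_additive_error
    {Ω : Type*} [MeasurableSpace Ω] (P : Measure Ω) [IsProbabilityMeasure P]
    (X ε e Xstar : ℤ → Ω → ℝ) (φ0 φ1 α0 α1 σε σe : ℝ)
    (hφ : |φ1| < 1) (hα1 : α1 ≠ 0)
    (hAR : ∀ t ω, X t ω = φ0 + φ1 * X (t - 1) ω + ε t ω)
    (hεmean : ∀ t, expect P (ε t) = 0)
    (hεvar : ∀ t, pvar P (ε t) = σε ^ 2)
    (hεindep : ∀ t s : ℤ, s < t → IndepFun (ε t) (X s) P)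
    (hXmean : ∀ t, expect P (X t) = φ0 / (1 - φ1))
    (hXvar : ∀ t, pvar P (X t) = σε ^ 2 / (1 - φ1 ^ 2))
    (hM : ∀ t ω, Xstar t ω = α0 + α1 * X t ω + e t ω)
    (hemean : ∀ t, expect P (e t) = 0)
    (hevar : ∀ t, pvar P (e t) = σe ^ 2)
    (heX : ∀ t s : ℤ, IndepFun (e t) (X s) P)
    (hee : ∀ t s : ℤ, t ≠ s → IndepFun (e t) (e s) P)
    (hXint : ∀ t, Integrable (X t) P)
    (hXsq : ∀ t, Integrable (fun ω => X t ω ^ 2) P)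
    (heint : ∀ t, Integrable (e t) P)
    (hesq : ∀ t, Integrable (fun ω => e t ω ^ 2) P) :
    ∀ t : ℤ,
      expect P (Xstar t)
          - (cov P (Xstar t) (Xstar (t - 1)) / pvar P (Xstar (t - 1)))
            * expect P (Xstar (t - 1))
        = (α0 + α1 * φ0 / (1 - φ1))
            * (1 - φ1 * (α1 ^ 2 * σε ^ 2 / (α1 ^ 2 * σε ^ 2 + σe ^ 2 * (1 - φ1 ^ 2)))) := by
  intro t
  obtain ⟨hφl, hφr⟩ := abs_lt.mp hφ
  have hone : (1 : ℝ) - φ1 ≠ 0 := by nlinarith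
  have hc : (1 : ℝ) - φ1 ^ 2 > 0 := by nlinarith
  set μ : ℝ := φ0 / (1 - φ1) with hμ
  -- ε is integrable
  have hεfun : ∀ u : ℤ, ε u = fun ω => (X u ω - φ0) - φ1 * X (u - 1) ω := by
    intro u; funext ω; rw [hAR u ω]; ring
  have hεint : ∀ u : ℤ, Integrable (ε u) P := by
    intro u; rw [hεfun u]
    exact ((hXint u).sub (integrable_const _)).sub ((hXint (u - 1)).const_mul _)
  -- the key centering identity: X t - μ = φ1 (X (t-1) - μ) + ε t
  have hμfix : φ0 + φ1 * μ = μ := by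
    rw [hμ]; field_simp; ring
  have hXfun : ∀ ω, X t ω - μ = φ1 * (X (t - 1) ω - μ) + ε t ω := by
    intro ω; rw [hAR t ω]; nlinarith [hμfix]
  have hXstarfun : ∀ u : ℤ, Xstar u = fun ω => α0 + α1 * X u ω + e u ω := by
    intro u; funext ω; exact hM u ω
  -- expectations of Xstar
  have hEstar : ∀ u : ℤ, expect P (Xstar u) = α0 + α1 * μ := by
    intro u
    rw [hXstarfun u, expect_combo P α0 α1 (hXint u) (heint u), hXmean u, hemean u]
    ring
  -- integrability of centered products
  have hXXc : ∀ u : ℤ, Integrable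
      (fun ω => (X u ω - expect P (X u)) * (X u ω - expect P (X u))) P :=
    fun u => integrable_centered_sq P (hXint u) (hXsq u) _
  have heec : ∀ u : ℤ, Integrable
      (fun ω => (e u ω - expect P (e u)) * (e u ω - expect P (e u))) P :=
    fun u => integrable_centered_sq P (heint u) (hesq u) _
  have hXec : ∀ u v : ℤ, Integrable
      (fun ω => (X u ω - expect P (X u)) * (e v ω - expect P (e v))) P :=
    fun u v => integrable_centered_mul P (heX v u).symm (hXint u) (heint v) _ _
  have heXc : ∀ u v : ℤ, Integrable
      (fun ω => (e u ω - expect P (e u)) * (X v ω - expect P (X v))) P :=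
    fun u v => integrable_centered_mul P (heX u v) (heint u) (hXint v) _ _
  have heec' : Integrable
      (fun ω => (e t ω - expect P (e t)) * (e (t-1) ω - expect P (e (t-1)))) P :=
    integrable_centered_mul P (hee t (t-1) (by omega)) (heint t) (heint (t-1)) _ _
  have hXXc' : Integrable
      (fun ω => (X t ω - expect P (X t)) * (X (t-1) ω - expect P (X (t-1)))) P := by
    have : (fun ω => (X t ω - expect P (X t)) * (X (t-1) ω - expect P (X (t-1))))
        = fun ω => φ1 * ((X (t-1) ω - μ) * (X (t-1) ω - μ)) + ε t ω * (X (t-1) ω - μ) := by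
      funext ω
      rw [hXmean t, hXmean (t-1), hXfun ω]
      ring
    rw [this]
    refine Integrable.add ?_ ?_
    · have := hXXc (t-1); rw [hXmean (t-1)] at this
      exact this.const_mul _
    · have hind : IndepFun (ε t) (fun ω => X (t-1) ω - μ) P := by
        have := (hεindep t (t-1) (by omega)).comp measurable_id (measurable_id.sub_const μ)
        exact this
      exact hind.integrable_mul (hεint t) ((hXint (t-1)).sub (integrable_const _))
  -- covariance of X t with X (t-1)
  have hcovXX : cov P (X t) (X (t-1)) = φ1 * (σε ^ 2 / (1 - φ1 ^ 2)) := by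
    unfold cov
    have hrw : (fun ω => (X t ω - expect P (X t)) * (X (t-1) ω - expect P (X (t-1))))
        = fun ω => φ1 * ((X (t-1) ω - expect P (X (t-1))) * (X (t-1) ω - expect P (X (t-1))))
          + (ε t ω - expect P (ε t)) * (X (t-1) ω - expect P (X (t-1))) := by
      funext ω
      rw [hXmean t, hXmean (t-1), hεmean t, hXfun ω]
      ring
    have h1 : Integrable (fun ω => (ε t ω - expect P (ε t)) *
        (X (t-1) ω - expect P (X (t-1)))) P :=
      integrable_centered_mul P (hεindep t (t-1) (by omega)) (hεint t) (hXint (t-1)) _ _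
    rw [hrw, expect_add P ((hXXc (t-1)).const_mul _) h1, expect_const_mul,
      integral_centered_mul_indep P (hεindep t (t-1) (by omega)) (hεint t) (hXint (t-1))]
    have hv := hXvar (t-1)
    unfold pvar cov at hv
    rw [hv, hεmean t]
    ring
  -- covariance of Xstar t with Xstar (t-1)
  have hcovstar : cov P (Xstar t) (Xstar (t-1))
      = α1 ^ 2 * (φ1 * (σε ^ 2 / (1 - φ1 ^ 2))) := by
    rw [hXstarfun t, hXstarfun (t-1),
      cov_affine_expand P α0 α1 (X t) (X (t-1)) (e t) (e (t-1)) (hXint t) (hXint (t-1))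
        (heint t) (heint (t-1)) hXXc' (hXec t (t-1)) (heXc t (t-1)) heec',
      hcovXX,
      cov_indep_zero P (heX (t-1) t).symm (hXint t) (heint (t-1)),
      cov_indep_zero P (heX t (t-1)) (heint t) (hXint (t-1)),
      cov_indep_zero P (hee t (t-1) (by omega)) (heint t) (heint (t-1))]
    ring
  -- variance of Xstar (t-1)
  have hvarstar : pvar P (Xstar (t-1))
      = α1 ^ 2 * (σε ^ 2 / (1 - φ1 ^ 2)) + σe ^ 2 := by
    unfold pvar
    rw [hXstarfun (t-1),
      cov_affine_expand P α0 α1 (X (t-1)) (X (t-1)) (e (t-1)) (e (t-1)) (hXint (t-1))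
        (hXint (t-1)) (heint (t-1)) (heint (t-1)) (hXXc (t-1)) (hXec (t-1) (t-1))
        (heXc (t-1) (t-1)) (heec (t-1)),
      cov_indep_zero P (heX (t-1) (t-1)).symm (hXint (t-1)) (heint (t-1)),
      cov_indep_zero P (heX (t-1) (t-1)) (heint (t-1)) (hXint (t-1))]
    have hv := hXvar (t-1); unfold pvar at hv
    have he := hevar (t-1); unfold pvar at he
    rw [hv, he]
    ring
  -- final computation
  rw [hEstar t, hEstar (t-1), hcovstar, hvarstar]
  have hratio : α1 ^ 2 * (φ1 * (σε ^ 2 / (1 - φ1 ^ 2)))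
      / (α1 ^ 2 * (σε ^ 2 / (1 - φ1 ^ 2)) + σe ^ 2)
      = φ1 * (α1 ^ 2 * σε ^ 2 / (α1 ^ 2 * σε ^ 2 + σe ^ 2 * (1 - φ1 ^ 2))) := by
    have hc' : (1 : ℝ) - φ1 ^ 2 ≠ 0 := ne_of_gt hc
    have h1 : α1 ^ 2 * (φ1 * (σε ^ 2 / (1 - φ1 ^ 2)))
        = (φ1 * (α1 ^ 2 * σε ^ 2)) / (1 - φ1 ^ 2) := by ring
    have h2 : α1 ^ 2 * (σε ^ 2 / (1 - φ1 ^ 2)) + σe ^ 2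
        = (α1 ^ 2 * σε ^ 2 + σe ^ 2 * (1 - φ1 ^ 2)) / (1 - φ1 ^ 2) := by
      field_simp
    rw [h1, h2, div_div_div_eq, mul_comm (1 - φ1 ^ 2) (α1 ^ 2 * σε ^ 2 + σe ^ 2 * (1 - φ1 ^ 2)),
      mul_div_mul_right _ _ hc', mul_div_assoc]
  rw [hratio]
  rw [hμ]
  ring
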